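/- Let (X, 𝒰) be a uniform space and u ∈ ℱ(X). For every entourage W ∈ 𝒰, there exist numbers 0 = α₀ < α₁ < ⋯ < α_n = 1 such that (u_{α_k⁺}, u_{α_{k+1}}) ∈ 𝒦[W] for k = 0, 1, ..., n−1, where u_{α⁺} = lim_{λ→α⁺} u_λ = closure of ⋃_{β>α} u_β. -/

import Mathlib

open Set Filter Topology
open scoped Uniformity

/-- The α-cut of a fuzzy set: `{x | α ≤ u x}` for `α ≠ 0`, and the support
(closure of `{x | 0 < u x}`) for `α = 0`. -/
noncomputable def fuzzyCut {X : Type*} [TopologicalSpace X] (u : X → ℝ) (α : ℝ) : Set X :=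
  if α = 0 then closure {x | 0 < u x} else {x | α ≤ u x}

/-- `u` belongs to `ℱ(X)`: a normal upper semicontinuous `[0,1]`-valued fuzzy set
with compact support. -/
structure IsFuzzySet {X : Type*} [TopologicalSpace X] (u : X → ℝ) : Prop where
  mem_Icc : ∀ x, u x ∈ Set.Icc (0:ℝ) 1
  usc : UpperSemicontinuous u
  normal : ∃ x, u x = 1
  compact_supp : IsCompact (closure {x | 0 < u x})

/-- The Zadeh extension of `f`: `x ↦ sup {u z : f z = x}` (and `0` when the
preimage is empty, since `sSup ∅ = 0` in `ℝ`). -/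
noncomputable def zadeh {X : Type*} (f : X → X) (u : X → ℝ) : X → ℝ :=
  fun x => sSup (u '' (f ⁻¹' {x}))

/-- `W(A) = ⋃ a ∈ A, W(a)` where `W(a) = {y | (a, y) ∈ W}`. -/
def ballImage {Y : Type*} (W : Set (Y × Y)) (A : Set Y) : Set Y :=
  {y | ∃ a ∈ A, (a, y) ∈ W}

/-- The Hausdorff entourage relation `𝒦[W]`: `(A,B) ∈ 𝒦[W]` iff `A ⊆ W(B)` and `B ⊆ W(A)`. -/
def KRel {Y : Type*} (W : Set (Y × Y)) (A B : Set Y) : Prop :=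
  A ⊆ ballImage W B ∧ B ⊆ ballImage W A

/-- The level-wise entourage relation `ℱ[W]`: `(u_α, v_α) ∈ 𝒦[W]` for all `α ∈ [0,1]`. -/
def FRel {X : Type*} [TopologicalSpace X] (W : Set (X × X)) (u v : X → ℝ) : Prop :=
  ∀ α ∈ Set.Icc (0:ℝ) 1, KRel W (fuzzyCut u α) (fuzzyCut v α)

/-- The Skorokhod entourage relation `G[W, ε]`: there is an increasing homeomorphism `t`
of `[0,1]` with `‖t‖ < ε` and `(u_α, v_{t α}) ∈ 𝒦[W]` for all `α ∈ [0,1]`. -/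
def SkoRel {X : Type*} [TopologicalSpace X] (W : Set (X × X)) (ε : ℝ) (u v : X → ℝ) : Prop :=
  ∃ t : ℝ → ℝ, StrictMonoOn t (Set.Icc 0 1) ∧ t 0 = 0 ∧ t 1 = 1 ∧
    Set.MapsTo t (Set.Icc 0 1) (Set.Icc 0 1) ∧ Set.SurjOn t (Set.Icc 0 1) (Set.Icc 0 1) ∧
    (∀ α ∈ Set.Icc (0:ℝ) 1, |t α - α| < ε) ∧
    (∀ α ∈ Set.Icc (0:ℝ) 1, KRel W (fuzzyCut u α) (fuzzyCut v (t α)))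

/-- The sendograph of `u`: `end(u) ∩ (u₀ × [0,1])`. -/
noncomputable def send {X : Type*} [TopologicalSpace X] (u : X → ℝ) : Set (X × ℝ) :=
  {p | p.1 ∈ fuzzyCut u 0 ∧ p.2 ∈ Set.Icc (0:ℝ) 1 ∧ p.2 ≤ u p.1}

/-- The product entourage `U × V_ε` on `X × [0,1]`. -/
def prodEnt {X : Type*} (U : Set (X × X)) (ε : ℝ) : Set ((X × ℝ) × (X × ℝ)) :=
  {p | (p.1.1, p.2.1) ∈ U ∧ |p.1.2 - p.2.2| < ε}

/-- The sendograph entourage relation `S[U, ε]`. -/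
noncomputable def SendRel {X : Type*} [TopologicalSpace X] (U : Set (X × X)) (ε : ℝ)
    (u v : X → ℝ) : Prop :=
  KRel (prodEnt U ε) (send u) (send v)

/-- `u_{α⁺} = closure (⋃ β ∈ (α, 1], u_β)`, the right limit of the level map. -/
noncomputable def cutPlus {X : Type*} [TopologicalSpace X] (u : X → ℝ) (α : ℝ) : Set X :=
  closure (⋃ β ∈ Set.Ioc α 1, fuzzyCut u β)

/-- `B` belongs to the Vietoris basic open set `⟨V 0, …, V (k-1)⟩`. -/
def inVietoris {Y : Type*} (B : Set Y) (k : ℕ) (V : Fin k → Set Y) : Prop :=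
  B ⊆ (⋃ i, V i) ∧ ∀ i, (B ∩ V i).Nonempty


section Aux

variable {X : Type*} [UniformSpace X]

lemma ballImage_mono {W : Set (X × X)} {A B : Set X} (h : A ⊆ B) :
    ballImage W A ⊆ ballImage W B := fun y ⟨a, ha, haw⟩ => ⟨a, h ha, haw⟩

lemma ballImage_mono_left {W W' : Set (X × X)} (h : W ⊆ W') (A : Set X) :
    ballImage W A ⊆ ballImage W' A := fun y ⟨a, ha, haw⟩ => ⟨a, ha, h haw⟩

lemma subset_ballImage {W : Set (X × X)} (hW : W ∈ 𝓤 X) {A : Set X} :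
    A ⊆ ballImage W A := fun a ha => ⟨a, ha, refl_mem_uniformity hW⟩

lemma isOpen_ballImage {W : Set (X × X)} (hW : IsOpen W) (A : Set X) :
    IsOpen (ballImage W A) := by
  have : ballImage W A = ⋃ a ∈ A, Prod.mk a ⁻¹' W := by
    ext y; simp [ballImage, Set.mem_iUnion]
  rw [this]
  exact isOpen_biUnion fun a _ => hW.preimage (continuous_const.prodMk continuous_id)

variable {u : X → ℝ}

lemma fuzzyCut_of_pos {β : ℝ} (hβ : β ≠ 0) : fuzzyCut u β = {x | β ≤ u x} := if_neg hβ

lemma fuzzyCut_antitone {β β' : ℝ} (h0 : 0 < β) (h : β ≤ β') :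
    fuzzyCut u β' ⊆ fuzzyCut u β := by
  rw [fuzzyCut_of_pos h0.ne', fuzzyCut_of_pos (h0.trans_le h).ne']
  exact fun x hx => le_trans h hx

lemma biUnion_fuzzyCut_subset {α : ℝ} (hα : 0 ≤ α) :
    (⋃ β ∈ Set.Ioc α 1, fuzzyCut u β) ⊆ {x | α < u x} := by
  intro x hx
  rcases Set.mem_iUnion₂.1 hx with ⟨β, hβ, hxβ⟩
  rw [fuzzyCut_of_pos (hα.trans_lt hβ.1).ne'] at hxβ
  exact lt_of_lt_of_le hβ.1 hxβ

lemma cutPlus_subset_supp (hα : 0 ≤ α) :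
    cutPlus u α ⊆ closure {x | 0 < u x} := by
  refine closure_minimal ?_ isClosed_closure
  refine (biUnion_fuzzyCut_subset hα).trans ?_
  exact fun x hx => subset_closure (lt_of_le_of_lt hα hx)

lemma isCompact_cutPlus (hu : IsFuzzySet u) {α : ℝ} (hα : 0 ≤ α) :
    IsCompact (cutPlus u α) :=
  hu.compact_supp.of_isClosed_subset isClosed_closure (cutPlus_subset_supp hα)

lemma cutPlus_antitone {α α' : ℝ} (h : α ≤ α') : cutPlus u α' ⊆ cutPlus u α := by
  refine closure_mono (Set.iUnion₂_subset fun β hβ => ?_)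
  exact Set.subset_biUnion_of_mem (Set.Ioc_subset_Ioc_left h hβ)

lemma fuzzyCut_subset_cutPlus {α β : ℝ} (hαβ : α < β) (hβ1 : β ≤ 1) :
    fuzzyCut u β ⊆ cutPlus u α :=
  (Set.subset_biUnion_of_mem (show β ∈ Set.Ioc α 1 from ⟨hαβ, hβ1⟩)).trans subset_closure

lemma exists_right (hu : IsFuzzySet u) {W : Set (X × X)} (hW : W ∈ 𝓤 X)
    (hWo : IsOpen W) (hWs : SetRel.IsSymm W) {α : ℝ} (hα : 0 ≤ α) (hα1 : α < 1) :
    ∃ β, α < β ∧ β ≤ 1 ∧ cutPlus u α ⊆ ballImage W (fuzzyCut u β) := by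
  haveI : Nonempty ↥(Set.Ioc α 1) := ⟨⟨1, hα1, le_refl 1⟩⟩
  obtain ⟨⟨β, hβ⟩, hsub⟩ :=
    (isCompact_cutPlus hu hα).elim_directed_cover
      (fun β : ↥(Set.Ioc α 1) => ballImage W (fuzzyCut u (β : ℝ)))
      (fun β => isOpen_ballImage hWo _)
      (by
        intro x hx
        obtain ⟨y, hyW, hyS⟩ := mem_closure_iff.1 hx (Prod.mk x ⁻¹' W)
          (hWo.preimage (continuous_const.prodMk continuous_id)) (refl_mem_uniformity hW)
        rcases Set.mem_iUnion₂.1 hyS with ⟨β, hβ, hy⟩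
        exact Set.mem_iUnion.2 ⟨⟨β, hβ⟩, ⟨y, hy, by haveI := hWs; exact SetRel.symm (R := W) hyW⟩⟩)
      (by
        rintro ⟨β₁, hβ₁⟩ ⟨β₂, hβ₂⟩
        refine ⟨⟨min β₁ β₂, lt_min hβ₁.1 hβ₂.1, le_trans (min_le_left _ _) hβ₁.2⟩, ?_, ?_⟩
        · exact ballImage_mono (fuzzyCut_antitone (lt_min (hα.trans_lt hβ₁.1)
            (hα.trans_lt hβ₂.1)) (min_le_left _ _))
        · exact ballImage_mono (fuzzyCut_antitone (lt_min (hα.trans_lt hβ₁.1)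
            (hα.trans_lt hβ₂.1)) (min_le_right _ _)))
  exact ⟨β, hβ.1, hβ.2, hsub⟩

lemma exists_left (hu : IsFuzzySet u) {W : Set (X × X)} (hW : W ∈ 𝓤 X)
    (hWo : IsOpen W) {γ : ℝ} (hγ0 : 0 < γ) (hγ1 : γ ≤ 1) :
    ∃ δ, 0 ≤ δ ∧ δ < γ ∧ cutPlus u δ ⊆ ballImage W (fuzzyCut u γ) := by
  haveI : Nonempty ↥(Set.Ico (0:ℝ) γ) := ⟨⟨0, le_refl 0, hγ0⟩⟩
  set O := ballImage W (fuzzyCut u γ) with hO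
  obtain ⟨⟨δ, hδ⟩, hempty⟩ :=
    (isCompact_cutPlus hu le_rfl).elim_directed_family_closed
      (fun δ : ↥(Set.Ico (0:ℝ) γ) => cutPlus u (δ : ℝ) ∩ Oᶜ)
      (fun δ => isClosed_closure.inter (isOpen_ballImage hWo _).isClosed_compl)
      (by
        rw [Set.eq_empty_iff_forall_notMem]
        rintro x ⟨hx0, hx⟩
        simp only [Set.mem_iInter, Set.mem_inter_iff, Set.mem_compl_iff] at hx
        have hxO : x ∉ O := (hx ⟨0, le_refl 0, hγ0⟩).2
        have hxγ : γ ≤ u x := by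
          by_contra hlt
          push_neg at hlt
          set δ := (u x + γ) / 2 with hδdef
          have hux0 : 0 ≤ u x := (hu.mem_Icc x).1
          have hδ0 : 0 < δ := by positivity
          have huxδ : u x < δ := by rw [hδdef]; linarith
          have hδγ : δ < γ := by rw [hδdef]; linarith
          have hmem : x ∈ cutPlus u δ := (hx ⟨δ, hδ0.le, hδγ⟩).1
          obtain ⟨N, hN, hNlt⟩ := (hu.usc x δ huxδ).exists_mem
          obtain ⟨y, hyN, hyS⟩ := mem_closure_iff_nhds.1 hmem N hN
          have : δ < u y := biUnion_fuzzyCut_subset hδ0.le hyS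
          exact absurd (hNlt y hyN) (not_lt.2 this.le)
        refine hxO (subset_ballImage hW ?_)
        rw [fuzzyCut_of_pos hγ0.ne']
        exact hxγ)
      (by
        rintro ⟨δ₁, hδ₁⟩ ⟨δ₂, hδ₂⟩
        refine ⟨⟨max δ₁ δ₂, le_trans hδ₁.1 (le_max_left _ _), max_lt hδ₁.2 hδ₂.2⟩, ?_, ?_⟩
        · exact Set.inter_subset_inter_left _ (cutPlus_antitone (le_max_left _ _))
        · exact Set.inter_subset_inter_left _ (cutPlus_antitone (le_max_right _ _)))
  refine ⟨δ, hδ.1, hδ.2, fun x hx => ?_⟩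
  by_contra hxO
  exact Set.eq_empty_iff_forall_notMem.1 hempty x
    ⟨cutPlus_antitone hδ.1 hx, hx, hxO⟩

/-- A chain `0 = a₀ < ⋯ < aₙ = γ` with the one-sided step inclusions. -/
def FuzzyChain (W : Set (X × X)) (u : X → ℝ) (γ : ℝ) : Prop :=
  ∃ n, ∃ a : Fin (n + 1) → ℝ, 0 < n ∧ StrictMono a ∧ a 0 = 0 ∧ a (Fin.last n) = γ ∧
    ∀ k : Fin n, cutPlus u (a k.castSucc) ⊆ ballImage W (fuzzyCut u (a k.succ))

lemma strictMono_snoc {n : ℕ} {a : Fin (n + 1) → ℝ} {s : ℝ} (ha : StrictMono a)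
    (hs : a (Fin.last n) < s) : StrictMono (Fin.snoc a s : Fin (n + 2) → ℝ) := by
  rw [Fin.strictMono_iff_lt_succ]
  intro i
  refine Fin.lastCases ?_ (fun j => ?_) i
  · rw [Fin.succ_last, Fin.snoc_last, Fin.snoc_castSucc]
    exact hs
  · rw [Fin.succ_castSucc, Fin.snoc_castSucc, Fin.snoc_castSucc]
    exact ha ((Fin.castSucc_lt_succ (i := j)))

lemma FuzzyChain.snoc {W : Set (X × X)} {γ s : ℝ} (h : FuzzyChain W u γ) (hlt : γ < s)
    (hstep : cutPlus u γ ⊆ ballImage W (fuzzyCut u s)) : FuzzyChain W u s := by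
  obtain ⟨n, a, hn, hmono, h0, hlast, hsteps⟩ := h
  refine ⟨n + 1, Fin.snoc a s, Nat.succ_pos n, strictMono_snoc hmono (hlast ▸ hlt), ?_, ?_, ?_⟩
  · show (Fin.snoc a s : Fin (n + 2) → ℝ) (Fin.castSucc 0) = 0
    rw [Fin.snoc_castSucc]; exact h0
  · exact Fin.snoc_last _ _
  · intro k
    refine Fin.lastCases ?_ (fun j => ?_) k
    · rw [Fin.succ_last, Fin.snoc_last, Fin.snoc_castSucc, hlast]
      exact hstep
    · rw [Fin.succ_castSucc, Fin.snoc_castSucc, Fin.snoc_castSucc]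
      exact hsteps j

lemma fuzzyChain_nonneg {W : Set (X × X)} {n : ℕ} {a : Fin (n + 1) → ℝ}
    (hmono : StrictMono a) (h0 : a 0 = 0) (i : Fin (n + 1)) : 0 ≤ a i :=
  h0 ▸ hmono.monotone (Fin.zero_le i)

end Aux

/-- For every `u ∈ ℱ(X)` and every entourage `W`, there is a partition
`0 = α₀ < α₁ < ⋯ < α_n = 1` with `(u_{α_k⁺}, u_{α_{k+1}}) ∈ 𝒦[W]` for all `k`. -/
theorem stmt13 {X : Type*} [UniformSpace X] {u : X → ℝ} (hu : IsFuzzySet u) :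
    ∀ W ∈ 𝓤 X, ∃ (n : ℕ) (a : Fin (n + 1) → ℝ), 0 < n ∧ StrictMono a ∧
      a 0 = 0 ∧ a (Fin.last n) = 1 ∧
      ∀ k : Fin n, KRel W (cutPlus u (a k.castSucc)) (fuzzyCut u (a k.succ)) := by
  intro W hW
  obtain ⟨V, ⟨hV, hVo, hVs⟩, hVW⟩ := uniformity_hasBasis_open_symmetric.mem_iff.mp hW
  -- the set of endpoints of chains
  set S : Set ℝ := {γ | γ ≤ 1 ∧ FuzzyChain V u γ} with hS
  obtain ⟨β₀, hβ₀0, hβ₀1, hβ₀sub⟩ := exists_right hu hV hVo hVs le_rfl one_pos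
  have hβ₀S : β₀ ∈ S := by
    refine ⟨hβ₀1, 1, ![0, β₀], one_pos, ?_, rfl, rfl, ?_⟩
    · rw [Fin.strictMono_iff_lt_succ]
      intro i
      fin_cases i
      simpa using hβ₀0
    · intro k
      fin_cases k
      simpa using hβ₀sub
  have hSne : S.Nonempty := ⟨β₀, hβ₀S⟩
  have hSbdd : BddAbove S := ⟨1, fun γ hγ => hγ.1⟩
  set s := sSup S with hsdef
  have hs1 : s ≤ 1 := csSup_le hSne fun γ hγ => hγ.1
  have hs0 : 0 < s := lt_of_lt_of_le hβ₀0 (le_csSup hSbdd hβ₀S)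
  -- s ∈ S
  obtain ⟨δ, hδ0, hδs, hδsub⟩ := exists_left hu hV hVo hs0 hs1
  obtain ⟨γ, hγS, hδγ⟩ := exists_lt_of_lt_csSup hSne hδs
  have hγs : γ ≤ s := le_csSup hSbdd hγS
  have hchain_s : FuzzyChain V u s := by
    rcases eq_or_lt_of_le hγs with heq | hlt
    · exact heq ▸ hγS.2
    · exact hγS.2.snoc hlt ((cutPlus_antitone hδγ.le).trans hδsub)
  -- s = 1
  have hs_eq : s = 1 := by
    by_contra hne
    have hslt : s < 1 := lt_of_le_of_ne hs1 hne
    obtain ⟨β, hβs, hβ1, hβsub⟩ := exists_right hu hV hVo hVs hs0.le hslt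
    have hβS : β ∈ S := ⟨hβ1, hchain_s.snoc hβs hβsub⟩
    exact absurd (le_csSup hSbdd hβS) (not_le.2 hβs)
  obtain ⟨n, a, hn, hmono, h0, hlast, hsteps⟩ := hs_eq ▸ hchain_s
  refine ⟨n, a, hn, hmono, h0, hlast, fun k => ?_⟩
  constructor
  · exact (hsteps k).trans (ballImage_mono_left hVW _)
  · refine Set.Subset.trans ?_ (subset_ballImage hW)
    refine fuzzyCut_subset_cutPlus (hmono ((Fin.castSucc_lt_succ (i := k)))) ?_
    exact hlast ▸ hmono.monotone (Fin.le_last _)
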